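/- Let σ and τ be functions from a finite set S of n distinct elements to the integers such that σ is a bijection onto {1,…,n} and |τ(x) − σ(x)| < 4w for all x ∈ S. Let σ' be any bijection from S onto {1,…,n} that sorts the elements in non-decreasing order of τ (i.e., τ(x) < τ(y) implies σ'(x) < σ'(y)). Then |σ'(x) − τ(x)| < 4w for all x ∈ S. -/
import Mathlib


/-- If σ is a bijection onto positions {1,…,n}, τ approximates the positions within 4w,
and σ' re-sorts the elements in non-decreasing order of τ, then σ' also stays within 4w
of τ. -/
theorem sort_by_approx_rank {α : Type*} [Fintype α] (n : ℕ)
    (σ σ' : α ≃ Fin n) (τ : α → ℤ) (w : ℝ) (hw : 0 < w)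
    (hτσ : ∀ x : α, |(τ x : ℝ) - (((σ x : ℕ) : ℝ) + 1)| < 4 * w)
    (hsort : ∀ x y : α, τ x < τ y → σ' x < σ' y) :
    ∀ x : α, |(((σ' x : ℕ) : ℝ) + 1) - (τ x : ℝ)| < 4 * w := by
  intro x
  set k : ℕ := (σ' x : ℕ) with hk
  have hkn : k < n := (σ' x).isLt
  classical
  rw [abs_sub_lt_iff]
  constructor
  · -- (k+1) - τ x < 4w
    by_contra h
    push_neg at h
    -- τ x + 4w ≤ k + 1
    have hle : (τ x : ℝ) + 4 * w ≤ (k : ℝ) + 1 := by linarith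
    set A : Finset α := Finset.univ.filter (fun y => σ' y ≤ σ' x) with hA
    have hAcard : A.card = k + 1 := by
      have himg : A = (Finset.Iic (σ' x)).image σ'.symm := by
        ext y
        simp [hA, Finset.mem_image, Equiv.symm_apply_eq]
      rw [himg, Finset.card_image_of_injective _ σ'.symm.injective, Fin.card_Iic]
    have hmap : ∀ y ∈ A, σ y ∈ Finset.Iio (σ' x) := by
      intro y hy
      have hy' : σ' y ≤ σ' x := by simpa [hA] using hy
      have hτ : τ y ≤ τ x := by
        by_contra hc; push_neg at hc
        exact absurd (hsort x y hc) (not_lt.mpr hy')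
      have h1 := (abs_sub_lt_iff.mp (hτσ y)).2
      have hcast : (τ y : ℝ) ≤ (τ x : ℝ) := by exact_mod_cast hτ
      have : ((σ y : ℕ) : ℝ) + 1 < (k : ℝ) + 1 := by linarith
      have hlt : (σ y : ℕ) < k := by exact_mod_cast (by linarith : ((σ y : ℕ) : ℝ) < (k : ℝ))
      exact Finset.mem_Iio.mpr (Fin.lt_def.mpr hlt)
    have hcardle : A.card ≤ (Finset.Iio (σ' x)).card :=
      Finset.card_le_card_of_injOn σ hmap (σ.injective.injOn)
    rw [hAcard, Fin.card_Iio] at hcardle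
    omega
  · -- τ x - (k+1) < 4w
    by_contra h
    push_neg at h
    have hle : (k : ℝ) + 1 ≤ (τ x : ℝ) - 4 * w := by linarith
    set B : Finset α := Finset.univ.filter (fun y => σ' x ≤ σ' y) with hB
    have hBcard : B.card = n - k := by
      have himg : B = (Finset.Ici (σ' x)).image σ'.symm := by
        ext y
        simp [hB, Finset.mem_image, Equiv.symm_apply_eq]
      rw [himg, Finset.card_image_of_injective _ σ'.symm.injective, Fin.card_Ici]
    have hmap : ∀ y ∈ B, σ y ∈ Finset.Ioi (σ' x) := by
      intro y hy
      have hy' : σ' x ≤ σ' y := by simpa [hB] using hy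
      have hτ : τ x ≤ τ y := by
        by_contra hc; push_neg at hc
        exact absurd (hsort y x hc) (not_lt.mpr hy')
      have h1 := (abs_sub_lt_iff.mp (hτσ y)).1
      have hcast : (τ x : ℝ) ≤ (τ y : ℝ) := by exact_mod_cast hτ
      have : (k : ℝ) + 1 < ((σ y : ℕ) : ℝ) + 1 := by linarith
      have hlt : k < (σ y : ℕ) := by exact_mod_cast (by linarith : (k : ℝ) < ((σ y : ℕ) : ℝ))
      exact Finset.mem_Ioi.mpr (Fin.lt_def.mpr hlt)
    have hcardle : B.card ≤ (Finset.Ioi (σ' x)).card :=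
      Finset.card_le_card_of_injOn σ hmap (σ.injective.injOn)
    rw [hBcard, Fin.card_Ioi] at hcardle
    omega
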